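/- Let (X₁,p₁,Γ) be an F₁-graph bundle and (X₂,p₂,Γ) an F₂-graph bundle over the same base Γ. Then the triple (X₁ ⊞ X₂, (p₁,p₂), Γ) is an (F₁ □ F₂)-graph bundle, where F₁ □ F₂ is the Cartesian product of the fibers. -/

import Mathlib

open Classical Matrix Kronecker

universe u

noncomputable section

/-- A morphism of graphs: adjacent vertices are mapped to adjacent or equal vertices. -/
def IsGraphMorphism {V W : Type*} (G : SimpleGraph V) (H : SimpleGraph W) (f : V → W) : Prop :=
  ∀ ⦃a b : V⦄, G.Adj a b → H.Adj (f a) (f b) ∨ f a = f b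

/-- The graph `X̃` obtained from `X` by deleting the edges lying inside fibers of `p`. -/
def delFiberEdges {VX VB : Type*} (X : SimpleGraph VX) (p : VX → VB) : SimpleGraph VX where
  Adj a b := X.Adj a b ∧ p a ≠ p b
  symm := by
    constructor
    intro a b h
    exact ⟨h.1.symm, Ne.symm h.2⟩
  loopless := by
    constructor
    intro a h
    exact X.irrefl h.1

/-- `(X, p, B)` is an `F`-graph bundle. -/
structure IsGraphBundle {VF VX VB : Type*} (F : SimpleGraph VF) (X : SimpleGraph VX)
    (p : VX → VB) (B : SimpleGraph VB) : Prop where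
  morphism : IsGraphMorphism X B p
  surj : Function.Surjective p
  fiber_iso : ∀ v : VB, Nonempty ((X.induce (p ⁻¹' {v})) ≃g F)
  fiber_card : ∀ v : VB, Nat.card (p ⁻¹' {v}) = Nat.card VF
  covering : ∀ x : VX,
    Set.BijOn p ((delFiberEdges X p).neighborSet x) (B.neighborSet (p x))
  transport : ∀ ⦃v w : VB⦄, B.Adj v w →
    ∃ ψ : (X.induce (p ⁻¹' {v})) ≃g (X.induce (p ⁻¹' {w})),
      ∀ x : (p ⁻¹' {v}), X.Adj x.1 (ψ x).1

/-- Vertices of the pullback graph. -/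
abbrev PullbackVert {VB VX VC : Type*} (f : VB → VC) (p : VX → VC) :=
  {a : VB × VX // f a.1 = p a.2}

/-- The total space of the pullback of the bundle `(X, p, C)` along `f : B → C`. -/
def pullbackGraph {VB VX VC : Type*} (B : SimpleGraph VB) (X : SimpleGraph VX)
    (f : VB → VC) (p : VX → VC) (C : SimpleGraph VC) :
    SimpleGraph (PullbackVert f p) where
  Adj a b :=
    (a.1.1 = b.1.1 ∧ X.Adj a.1.2 b.1.2) ∨
    (B.Adj a.1.1 b.1.1 ∧ f a.1.1 = f b.1.1 ∧ a.1.2 = b.1.2) ∨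
    (B.Adj a.1.1 b.1.1 ∧ C.Adj (f a.1.1) (f b.1.1) ∧ X.Adj a.1.2 b.1.2)
  symm := by
    constructor
    rintro a b (⟨h1, h2⟩ | ⟨h1, h2, h3⟩ | ⟨h1, h2, h3⟩)
    · exact Or.inl ⟨h1.symm, h2.symm⟩
    · exact Or.inr (Or.inl ⟨h1.symm, h2.symm, h3.symm⟩)
    · exact Or.inr (Or.inr ⟨h1.symm, h2.symm, h3.symm⟩)
  loopless := by
    constructor
    rintro a (⟨_, h⟩ | ⟨h, _⟩ | ⟨h, _⟩)
    · exact X.irrefl h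
    · exact B.irrefl h
    · exact B.irrefl h

/-- The projection of the pullback bundle. -/
def pullbackProj {VB VX VC : Type*} (f : VB → VC) (p : VX → VC) :
    PullbackVert f p → VB := fun a => a.1.1

/-- Two graph bundles over the same base are equivalent. -/
def BundlesEquiv {VX VY VB : Type*} (X : SimpleGraph VX) (p : VX → VB)
    (Y : SimpleGraph VY) (q : VY → VB) : Prop :=
  ∃ Φ : X ≃g Y, ∀ x, q (Φ x) = p x

/-- A graph bundle is trivial if it is equivalent to `(B □ F, π, B)` with `π (v, f) = v`. -/
def IsTrivialBundle {VF VX VB : Type*} (F : SimpleGraph VF) (X : SimpleGraph VX)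
    (p : VX → VB) (B : SimpleGraph VB) : Prop :=
  ∃ Φ : X ≃g (B.boxProd F), ∀ x, (Φ x).1 = p x

/-- An `F`-voltage function on `B`. -/
structure VoltageFunction {VB VF : Type*} (B : SimpleGraph VB) (F : SimpleGraph VF) where
  volt : VB → VB → (F ≃g F)
  volt_symm : ∀ v w, volt w v = (volt v w).symm

/-- The graph `B ×_φ F` associated with a voltage function. -/
def voltageGraph {VB VF : Type*} (B : SimpleGraph VB) (F : SimpleGraph VF)
    (φ : VoltageFunction B F) : SimpleGraph (VB × VF) where
  Adj a b := (B.Adj a.1 b.1 ∧ b.2 = φ.volt a.1 b.1 a.2) ∨ (a.1 = b.1 ∧ F.Adj a.2 b.2)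
  symm := by
    constructor
    rintro a b (⟨h1, h2⟩ | ⟨h1, h2⟩)
    · refine Or.inl ⟨h1.symm, ?_⟩
      rw [φ.volt_symm, h2, RelIso.symm_apply_apply]
    · exact Or.inr ⟨h1.symm, h2.symm⟩
  loopless := by
    constructor
    rintro a (⟨h, _⟩ | ⟨_, h⟩)
    · exact B.irrefl h
    · exact F.irrefl h

/-- The pullback of a voltage function along a graph morphism. -/
def pullbackVoltage {VB VC VF : Type*} (B : SimpleGraph VB) (C : SimpleGraph VC)
    (F : SimpleGraph VF) (f : VB → VC) (φ : VoltageFunction C F) : VoltageFunction B F where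
  volt v w := if f v = f w then RelIso.refl _ else φ.volt (f v) (f w)
  volt_symm v w := by
    by_cases h : f v = f w
    · rw [if_pos h, if_pos h.symm]
      rfl
    · rw [if_neg h, if_neg (fun hh : f w = f v => h hh.symm), φ.volt_symm]
/-- Adjacency matrix (over `ℝ`). -/
def adjMat {V : Type*} (G : SimpleGraph V) : Matrix V V ℝ :=
  Matrix.of fun a b => if G.Adj a b then 1 else 0

/-- Permutation matrix of an automorphism of `F`. -/
def permMat {VF : Type*} {F : SimpleGraph VF} (ψ : F ≃g F) : Matrix VF VF ℝ :=
  Matrix.of fun a b => if b = ψ a then 1 else 0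

/-- The matrix `M_f` of a map of vertex sets. -/
def morMat {VB VC : Type*} (f : VB → VC) : Matrix VC VB ℝ :=
  Matrix.of fun c b => if f b = c then 1 else 0

/-- The matrix `A_B(ψ)` of a voltage function. -/
def voltMat {VB VF : Type*} {B : SimpleGraph VB} {F : SimpleGraph VF}
    (φ : VoltageFunction B F) (ψ : F ≃g F) : Matrix VB VB ℝ :=
  Matrix.of fun v w => if B.Adj v w ∧ φ.volt v w = ψ then 1 else 0

instance instFiniteGraphIso {VF : Type*} [Finite VF] (F : SimpleGraph VF) :
    Finite (F ≃g F) :=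
  Finite.of_injective (fun ψ => (ψ.toEquiv : VF ≃ VF)) (fun a b h => by
    cases a; cases b; simpa using h)

noncomputable instance instFintypeGraphIso {VF : Type*} [Finite VF] (F : SimpleGraph VF) :
    Fintype (F ≃g F) :=
  Fintype.ofFinite _

/-- The image graph `f(Γ)` of a graph morphism. -/
def imageGraph {VB VC : Type*} (B : SimpleGraph VB) (f : VB → VC) :
    SimpleGraph (Set.range f) where
  Adj a b := a.1 ≠ b.1 ∧ ∃ v w, B.Adj v w ∧ f v = a.1 ∧ f w = b.1
  symm := by
    constructor
    rintro a b ⟨hne, v, w, h, hv, hw⟩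
    exact ⟨hne.symm, w, v, h.symm, hw, hv⟩
  loopless := by
    constructor
    rintro a ⟨hne, -⟩
    exact hne rfl

/-- The Cayley graph of a group with respect to a set of generators. -/
def cayleyGraph {G : Type*} [Group G] (S : Set G) : SimpleGraph G :=
  SimpleGraph.fromRel (fun x y => ∃ s ∈ S, y = x * s)

/-- The subdirect product of two groups with amalgamated factor group `B`. -/
def subdirSubgroup {A₁ A₂ B : Type*} [Group A₁] [Group A₂] [Group B]
    (φ₁ : A₁ →* B) (φ₂ : A₂ →* B) : Subgroup (A₁ × A₂) where
  carrier := {a : A₁ × A₂ | φ₁ a.1 = φ₂ a.2}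
  one_mem' := by simp
  mul_mem' := by
    intro a b ha hb
    simp only [Set.mem_setOf_eq, Prod.fst_mul, Prod.snd_mul, _root_.map_mul] at *
    rw [ha, hb]
  inv_mem' := by
    intro a ha
    simp only [Set.mem_setOf_eq, Prod.fst_inv, Prod.snd_inv, _root_.map_inv] at *
    rw [ha]

/-- Box product of two graph isomorphisms. -/
def boxIsoAux {VA VB' VC VD : Type*} {A : SimpleGraph VA} {B : SimpleGraph VB'}
    {C : SimpleGraph VC} {D : SimpleGraph VD} (e₁ : A ≃g C) (e₂ : B ≃g D) :
    A.boxProd B ≃g C.boxProd D where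
  toEquiv := Equiv.prodCongr e₁.toEquiv e₂.toEquiv
  map_rel_iff' := by
    rintro ⟨a₁, a₂⟩ ⟨b₁, b₂⟩
    show (C.Adj (e₁ a₁) (e₁ b₁) ∧ (e₂ a₂ = e₂ b₂) ∨ D.Adj (e₂ a₂) (e₂ b₂) ∧ (e₁ a₁ = e₁ b₁)) ↔
      (A.Adj a₁ b₁ ∧ a₂ = b₂ ∨ B.Adj a₂ b₂ ∧ a₁ = b₁)
    rw [e₁.map_rel_iff, e₂.map_rel_iff, EmbeddingLike.apply_eq_iff_eq,
      EmbeddingLike.apply_eq_iff_eq]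

/-- The fiber of the pullback over `v` is the box product of the fibers. -/
def fiberIsoAux {VX₁ VX₂ VB : Type*}
    (X₁ : SimpleGraph VX₁) (X₂ : SimpleGraph VX₂) (B : SimpleGraph VB)
    (p₁ : VX₁ → VB) (p₂ : VX₂ → VB) (v : VB) :
    ((pullbackGraph X₁ X₂ p₁ p₂ B).induce
        ((fun a : PullbackVert p₁ p₂ => p₁ a.1.1) ⁻¹' {v})) ≃g
      ((X₁.induce (p₁ ⁻¹' {v})).boxProd (X₂.induce (p₂ ⁻¹' {v}))) where
  toEquiv :=
    { toFun := fun a => (⟨a.1.1.1, a.2⟩, ⟨a.1.1.2, (a.1.2.symm.trans a.2 : p₂ a.1.1.2 = v)⟩)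
      invFun := fun x => ⟨⟨(x.1.1, x.2.1), x.1.2.trans x.2.2.symm⟩, x.1.2⟩
      left_inv := fun a => rfl
      right_inv := fun x => rfl }
  map_rel_iff' := by
    rintro ⟨⟨⟨a₁, a₂⟩, ha⟩, hav⟩ ⟨⟨⟨b₁, b₂⟩, hb⟩, hbv⟩
    have hav' : p₁ a₁ = v := hav
    have hbv' : p₁ b₁ = v := hbv
    rw [SimpleGraph.boxProd_adj]
    constructor
    · rintro (⟨h1, h2⟩ | ⟨h1, h2⟩)
      · have h2' : a₂ = b₂ := congrArg Subtype.val h2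
        exact Or.inr (Or.inl ⟨h1, hav'.trans hbv'.symm, h2'⟩)
      · have h2' : a₁ = b₁ := congrArg Subtype.val h2
        exact Or.inl ⟨h2', h1⟩
    · rintro (⟨h1, h2⟩ | ⟨h1, h2, h3⟩ | ⟨h1, h2, h3⟩)
      · exact Or.inr ⟨h2, Subtype.ext h1⟩
      · exact Or.inl ⟨h1, Subtype.ext h3⟩
      · have h2' : B.Adj (p₁ a₁) (p₁ b₁) := h2
        rw [hav', hbv'] at h2'
        exact (B.irrefl h2').elim

/-- the subdirect product of two graph bundles over the same base is an
`F₁ □ F₂`-graph bundle. -/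
theorem subdir_isGraphBundle
    {VF₁ VF₂ VX₁ VX₂ VB : Type*}
    [Fintype VF₁] [Fintype VF₂] [Fintype VX₁] [Fintype VX₂] [Fintype VB]
    (F₁ : SimpleGraph VF₁) (F₂ : SimpleGraph VF₂)
    (X₁ : SimpleGraph VX₁) (X₂ : SimpleGraph VX₂) (B : SimpleGraph VB)
    (p₁ : VX₁ → VB) (p₂ : VX₂ → VB)
    (h₁ : IsGraphBundle F₁ X₁ p₁ B) (h₂ : IsGraphBundle F₂ X₂ p₂ B) :
    IsGraphBundle (F₁.boxProd F₂) (pullbackGraph X₁ X₂ p₁ p₂ B)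
      (fun a => p₁ a.1.1) B := by
  refine ⟨?_, ?_, ?_, ?_, ?_, ?_⟩
  · -- morphism
    rintro ⟨⟨a₁, a₂⟩, ha⟩ ⟨⟨b₁, b₂⟩, hb⟩ (⟨h1, h2⟩ | ⟨h1, h2, h3⟩ | ⟨h1, h2, h3⟩)
    · exact Or.inr (congrArg p₁ h1)
    · exact Or.inr h2
    · exact Or.inl h2
  · -- surj
    intro v
    obtain ⟨x₁, hx₁⟩ := h₁.surj v
    obtain ⟨x₂, hx₂⟩ := h₂.surj v
    exact ⟨⟨(x₁, x₂), hx₁.trans hx₂.symm⟩, hx₁⟩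
  · -- fiber_iso
    intro v
    obtain ⟨e₁⟩ := h₁.fiber_iso v
    obtain ⟨e₂⟩ := h₂.fiber_iso v
    exact ⟨(fiberIsoAux X₁ X₂ B p₁ p₂ v).trans (boxIsoAux e₁ e₂)⟩
  · -- fiber_card
    intro v
    rw [Nat.card_congr (fiberIsoAux X₁ X₂ B p₁ p₂ v).toEquiv, Nat.card_prod,
      Nat.card_prod]
    have c₁ := h₁.fiber_card v
    have c₂ := h₂.fiber_card v
    simp only [Nat.card_eq_fintype_card] at *
    rw [c₁, c₂]
  · -- covering
    rintro ⟨⟨x₁, x₂⟩, hx⟩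
    refine ⟨?_, ?_, ?_⟩
    · -- MapsTo
      rintro ⟨⟨b₁, b₂⟩, hb⟩ ⟨hadj, hne⟩
      rcases hadj with ⟨h1, h2⟩ | ⟨h1, h2, h3⟩ | ⟨h1, h2, h3⟩
      · exact absurd (congrArg p₁ h1) hne
      · exact absurd h2 hne
      · exact h2
    · -- InjOn
      rintro ⟨⟨b₁, b₂⟩, hb⟩ ⟨hbadj, hbne⟩ ⟨⟨c₁, c₂⟩, hc⟩ ⟨hcadj, hcne⟩ heq
      have hb3 : X₁.Adj x₁ b₁ ∧ B.Adj (p₁ x₁) (p₁ b₁) ∧ X₂.Adj x₂ b₂ := by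
        rcases hbadj with ⟨h1, h2⟩ | ⟨h1, h2, h3⟩ | ⟨h1, h2, h3⟩
        · exact absurd (congrArg p₁ h1) hbne
        · exact absurd h2 hbne
        · exact ⟨h1, h2, h3⟩
      have hc3 : X₁.Adj x₁ c₁ ∧ B.Adj (p₁ x₁) (p₁ c₁) ∧ X₂.Adj x₂ c₂ := by
        rcases hcadj with ⟨h1, h2⟩ | ⟨h1, h2, h3⟩ | ⟨h1, h2, h3⟩
        · exact absurd (congrArg p₁ h1) hcne
        · exact absurd h2 hcne
        · exact ⟨h1, h2, h3⟩
      have heq1 : p₁ b₁ = p₁ c₁ := heq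
      have hmb1 : b₁ ∈ (delFiberEdges X₁ p₁).neighborSet x₁ := ⟨hb3.1, hb3.2.1.ne⟩
      have hmc1 : c₁ ∈ (delFiberEdges X₁ p₁).neighborSet x₁ := ⟨hc3.1, hc3.2.1.ne⟩
      have hmb2 : b₂ ∈ (delFiberEdges X₂ p₂).neighborSet x₂ :=
        ⟨hb3.2.2, fun h => hb3.2.1.ne (hx.trans (h.trans hb.symm))⟩
      have hmc2 : c₂ ∈ (delFiberEdges X₂ p₂).neighborSet x₂ :=
        ⟨hc3.2.2, fun h => hc3.2.1.ne (hx.trans (h.trans hc.symm))⟩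
      have e1 : b₁ = c₁ := (h₁.covering x₁).injOn hmb1 hmc1 heq1
      have heq2 : p₂ b₂ = p₂ c₂ := hb.symm.trans (heq1.trans hc)
      have e2 : b₂ = c₂ := (h₂.covering x₂).injOn hmb2 hmc2 heq2
      exact Subtype.ext (Prod.ext e1 e2)
    · -- SurjOn
      intro w hw
      obtain ⟨b₁, hb₁mem, hb₁⟩ := (h₁.covering x₁).surjOn hw
      have hw2 : w ∈ B.neighborSet (p₂ x₂) := hx ▸ hw
      obtain ⟨b₂, hb₂mem, hb₂⟩ := (h₂.covering x₂).surjOn hw2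
      have hBadj : B.Adj (p₁ x₁) (p₁ b₁) := by rw [hb₁]; exact hw
      refine ⟨⟨(b₁, b₂), hb₁.trans hb₂.symm⟩,
        ⟨Or.inr (Or.inr ⟨hb₁mem.1, hBadj, hb₂mem.1⟩), hBadj.ne⟩, hb₁⟩
  · -- transport
    intro v w hvw
    obtain ⟨ψ₁, hψ₁⟩ := h₁.transport hvw
    obtain ⟨ψ₂, hψ₂⟩ := h₂.transport hvw
    refine ⟨(fiberIsoAux X₁ X₂ B p₁ p₂ v).trans
      ((boxIsoAux ψ₁ ψ₂).trans (fiberIsoAux X₁ X₂ B p₁ p₂ w).symm), ?_⟩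
    rintro ⟨⟨⟨x₁, x₂⟩, hx⟩, hv⟩
    have hv' : p₁ x₁ = v := hv
    have hx2 : p₂ x₂ = v := hx.symm.trans hv'
    have h1 := hψ₁ ⟨x₁, hv'⟩
    have h2 := hψ₂ ⟨x₂, hx2⟩
    refine Or.inr (Or.inr ⟨h1, ?_, h2⟩)
    show B.Adj (p₁ x₁) (p₁ (ψ₁ ⟨x₁, hv'⟩).1)
    have hw1 : p₁ (ψ₁ ⟨x₁, hv'⟩).1 = w := (ψ₁ ⟨x₁, hv'⟩).2
    rw [hv', hw1]
    exact hvw
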